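/- If σ ∈ ℂ with σ ≠ 1 is an eigenvalue of the complexification of G, i.e., there exists a nonzero z ∈ ℂ^p with Gz = σz, then |σ| < 1. -/

import Mathlib

open Matrix BigOperators

/-- If σ ∈ ℂ with σ ≠ 1 is an eigenvalue of the complexification
of G = −(L+D)⁻¹U, i.e. there exists a nonzero z ∈ ℂ^p with Gz = σz, then
|σ| < 1. -/
theorem stmt_5 {n p : ℕ} (X : Matrix (Fin n) (Fin p) ℝ)
    (hX : ∀ i : Fin p, Xᵀ i ≠ 0)
    (L D U G : Matrix (Fin p) (Fin p) ℝ)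
    (hL : ∀ i j, L i j = if j < i then (Xᵀ * X) i j else 0)
    (hD : ∀ i j, D i j = if i = j then (Xᵀ * X) i j else 0)
    (hU : ∀ i j, U i j = if i < j then (Xᵀ * X) i j else 0)
    (hG : G = -((L + D)⁻¹ * U))
    (σ : ℂ) (hσ : σ ≠ 1) (z : Fin p → ℂ) (hz : z ≠ 0)
    (heig : (G.map (fun r : ℝ => (r : ℂ))).mulVec z = σ • z) :
    ‖σ‖ < 1 := by
  classical
  have c : ℝ →+* ℂ := Complex.ofRealHom
  -- symmetry of A
  have hAsymm : ∀ i j, (Xᵀ * X) i j = (Xᵀ * X) j i := by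
    intro i j
    simp [Matrix.mul_apply, mul_comm]
  -- U = Lᵀ
  have hULt : U = Lᵀ := by
    ext i j
    rw [Matrix.transpose_apply, hU, hL, hAsymm]
  -- diagonal entries positive
  have hDpos : ∀ i, 0 < D i i := by
    intro i
    rw [hD]
    simp only [if_pos rfl]
    have : (Xᵀ * X) i i = ∑ k, X k i ^ 2 := by
      simp [Matrix.mul_apply, sq]
    rw [this]
    obtain ⟨k, hk⟩ := Function.ne_iff.1 (hX i)
    have hk' : X k i ≠ 0 := hk
    exact Finset.sum_pos' (fun k _ => sq_nonneg _)
      ⟨k, Finset.mem_univ _, by positivity⟩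
  -- L + D lower triangular
  have hLD_tri : (L + D)ᵀ.BlockTriangular id := by
    intro i j hij
    have hij' : j < i := hij
    have h1 : ¬ i < j := not_lt.2 hij'.le
    have h2 : j ≠ i := ne_of_lt hij'
    simp [Matrix.transpose_apply, hL, hD, h1, h2]
  have hdetLD : (L + D).det = ∏ i, D i i := by
    rw [← Matrix.det_transpose, Matrix.det_of_upperTriangular hLD_tri]
    congr 1
    ext i
    simp [Matrix.transpose_apply, hL, hD]
  have hdet_ne : (L + D).det ≠ 0 := by
    rw [hdetLD]
    exact (Finset.prod_pos (fun i _ => hDpos i)).ne'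
  have hunit : IsUnit (L + D).det := isUnit_iff_ne_zero.2 hdet_ne
  -- (L+D) * G = -U
  have hLDG : (L + D) * G = -U := by
    rw [hG, Matrix.mul_neg, ← Matrix.mul_assoc, Matrix.mul_nonsing_inv _ hunit,
      Matrix.one_mul]
  -- complexification
  set f : ℝ →+* ℂ := Complex.ofRealHom with hf
  have hcoe : (fun r : ℝ => (r : ℂ)) = ⇑f := rfl
  have hmapH : ∀ {a b : ℕ} (M : Matrix (Fin a) (Fin b) ℝ), (M.map ⇑f)ᴴ = Mᵀ.map ⇑f := by
    intro a b M
    ext i j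
    simp only [Matrix.conjTranspose_apply, Matrix.map_apply, Matrix.transpose_apply,
      Complex.star_def]
    exact Complex.conj_ofReal _
  have hmap_add : ∀ (M N : Matrix (Fin p) (Fin p) ℝ),
      (M + N).map ⇑f = M.map ⇑f + N.map ⇑f := by
    intro M N; ext i j; simp
  have hmap_neg : ∀ (M : Matrix (Fin p) (Fin p) ℝ),
      (-M).map ⇑f = -(M.map ⇑f) := by
    intro M; ext i j; simp
  -- key vector identity
  have key : σ • (((L + D).map f) *ᵥ z) = -((U.map f) *ᵥ z) := by
    have h1 : (L + D).map f *ᵥ (G.map f *ᵥ z) = -((U.map f) *ᵥ z) := by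
      rw [Matrix.mulVec_mulVec, ← Matrix.map_mul, hLDG, hmap_neg,
        Matrix.neg_mulVec]
    rw [hcoe] at heig
    rw [heig, Matrix.mulVec_smul] at h1
    exact h1
  -- scalar quantities
  set l : ℂ := star z ⬝ᵥ (L.map f *ᵥ z) with hl_def
  set dr : ℝ := ∑ i, D i i * Complex.normSq (z i) with hdr_def
  have hd : star z ⬝ᵥ (D.map f *ᵥ z) = (dr : ℂ) := by
    have hDdiag : D = Matrix.diagonal (fun i => D i i) := by
      ext i j
      by_cases h : i = j
      · subst h; simp [Matrix.diagonal]
      · simp [Matrix.diagonal, h, hD i j]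
    rw [hDdiag, hdr_def]
    push_cast
    rw [Matrix.diagonal_map (by simp)]
    simp only [Matrix.mulVec_diagonal, dotProduct, Pi.star_apply]
    refine Finset.sum_congr rfl fun i _ => ?_
    rw [show star (z i) = (starRingEnd ℂ) (z i) from rfl,
      show f (D i i) = ((D i i : ℝ) : ℂ) from rfl, ← Complex.mul_conj]
    ring
  have hu : star z ⬝ᵥ (U.map f *ᵥ z) = star l := by
    have h1 : star (star z ⬝ᵥ (L.map f *ᵥ z)) = star z ⬝ᵥ ((L.map f)ᴴ *ᵥ z) := by
      rw [Matrix.star_dotProduct, star_star, Matrix.star_mulVec,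
        ← Matrix.dotProduct_mulVec]
    rw [hULt, ← hmapH, ← h1]
  -- scalar identity: σ * (l + dr) = -star l
  have keyd : σ * (l + (dr : ℂ)) = -(star l) := by
    have := congrArg (fun v => star z ⬝ᵥ v) key
    simp only [dotProduct_smul, dotProduct_neg] at this
    rw [hmap_add, Matrix.add_mulVec, dotProduct_add, hd, hu,
      ← hl_def] at this
    rwa [smul_eq_mul] at this
  -- dr > 0
  have hdr_pos : 0 < dr := by
    obtain ⟨i, hi⟩ := Function.ne_iff.1 hz
    refine Finset.sum_pos' (fun j _ => mul_nonneg (hDpos j).le (Complex.normSq_nonneg _)) ⟨i, Finset.mem_univ _, ?_⟩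
    exact mul_pos (hDpos i) (Complex.normSq_pos.2 hi)
  -- positive semidefiniteness
  have hAdecomp : Xᵀ * X = L + D + U := by
    ext i j
    rcases lt_trichotomy i j with h | h | h
    · simp [hL i j, hD i j, hU i j, h, h.ne, not_lt.2 h.le, lt_asymm h]
    · subst h; simp [hL i i, hD i i, hU i i]
    · simp [hL i j, hD i j, hU i j, h, (ne_of_lt h).symm, lt_asymm h]
  set w : Fin n → ℂ := X.map f *ᵥ z with hw_def
  have hq : star z ⬝ᵥ ((Xᵀ * X).map f *ᵥ z) = star w ⬝ᵥ w := by
    rw [Matrix.map_mul, ← Matrix.mulVec_mulVec, hw_def]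
    rw [show (Xᵀ.map f : Matrix (Fin p) (Fin n) ℂ) = (X.map f)ᴴ from (hmapH X).symm]
    rw [Matrix.star_mulVec, ← Matrix.dotProduct_mulVec]
  have hq2 : star z ⬝ᵥ ((Xᵀ * X).map f *ᵥ z) = l + (dr : ℂ) + star l := by
    rw [hAdecomp, hmap_add, hmap_add, Matrix.add_mulVec,
      Matrix.add_mulVec, dotProduct_add, dotProduct_add, hd, hu, ← hl_def]
  set qr : ℝ := 2 * l.re + dr with hqr_def
  have hqc : l + (dr : ℂ) + star l = (qr : ℂ) := by
    rw [hqr_def]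
    push_cast
    rw [show star l = (starRingEnd ℂ) l from rfl]
    rw [show l + (dr:ℂ) + (starRingEnd ℂ) l = (l + (starRingEnd ℂ) l) + dr by ring,
      Complex.add_conj]
    push_cast; ring
  have hww : star w ⬝ᵥ w = ((∑ i, Complex.normSq (w i) : ℝ) : ℂ) := by
    simp only [dotProduct, Pi.star_apply]
    push_cast
    refine Finset.sum_congr rfl fun i _ => ?_
    rw [show star (w i) = (starRingEnd ℂ) (w i) from rfl, mul_comm]
    exact Complex.mul_conj _
  have hqr_eq : qr = ∑ i, Complex.normSq (w i) := by
    have : ((qr : ℝ) : ℂ) = ((∑ i, Complex.normSq (w i) : ℝ) : ℂ) := by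
      rw [← hqc, ← hq2, hq, hww]
    exact_mod_cast this
  have hqr_nonneg : 0 ≤ qr := by
    rw [hqr_eq]
    exact Finset.sum_nonneg fun i _ => Complex.normSq_nonneg _
  -- strict positivity of qr
  have hqr_pos : 0 < qr := by
    rcases hqr_nonneg.lt_or_eq with h | h
    · exact h
    exfalso
    have hw0 : w = 0 := by
      funext i
      have hsum : ∑ i, Complex.normSq (w i) = 0 := by rw [← hqr_eq, ← h]
      have := (Finset.sum_eq_zero_iff_of_nonneg
        (fun j _ => Complex.normSq_nonneg (w j))).1 hsum i (Finset.mem_univ i)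
      simpa using Complex.normSq_eq_zero.1 this
    -- then A z = 0, so (L+D)z = -(Uz), so (L+D)z = σ (L+D)z, so (L+D)z = 0, so z = 0
    have hAz : ((Xᵀ * X).map f) *ᵥ z = 0 := by
      rw [Matrix.map_mul, ← Matrix.mulVec_mulVec, ← hw_def, hw0, Matrix.mulVec_zero]
    have hLDz : ((L + D).map f) *ᵥ z = -((U.map f) *ᵥ z) := by
      have : ((L + D).map f) *ᵥ z + (U.map f) *ᵥ z = 0 := by
        rw [← Matrix.add_mulVec, ← hmap_add, ← hAdecomp]
        exact hAz
      linear_combination (norm := module) this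
    have hv0 : ((L + D).map f) *ᵥ z = 0 := by
      have h2 : σ • (((L + D).map f) *ᵥ z) = ((L + D).map f) *ᵥ z := by
        rw [key, ← hLDz]
      have h3 : (σ - 1) • (((L + D).map f) *ᵥ z) = 0 := by
        rw [sub_smul, one_smul, h2, sub_self]
      rcases smul_eq_zero.1 h3 with h4 | h4
      · exact absurd (sub_eq_zero.1 h4) hσ
      · exact h4
    have hdetc : IsUnit ((L + D).map ⇑f).det := by
      have hmd : ((L + D).map ⇑f).det = f (L + D).det := by
        rw [RingHom.map_det, RingHom.mapMatrix_apply]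
      rw [hmd]
      exact isUnit_iff_ne_zero.2 (Complex.ofReal_ne_zero.2 hdet_ne)
    have : z = 0 := by
      have := congrArg (fun v => (((L + D).map f)⁻¹) *ᵥ v) hv0
      simpa [Matrix.mulVec_mulVec, Matrix.nonsing_inv_mul _ hdetc] using this
    exact hz this
  -- final computation
  have habs : ‖σ‖ * ‖l + (dr : ℂ)‖ = ‖l‖ := by
    rw [← norm_mul, keyd, norm_neg]
    exact norm_star l
  have hlt : ‖l‖ < ‖l + (dr : ℂ)‖ := by
    have h1 : Complex.normSq (l + (dr : ℂ)) = Complex.normSq l + dr * qr := by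
      simp only [Complex.normSq_apply, Complex.add_re, Complex.add_im,
        Complex.ofReal_re, Complex.ofReal_im, hqr_def]
      ring
    have h2 : ‖l‖ ^ 2 < ‖l + (dr : ℂ)‖ ^ 2 := by
      rw [Complex.sq_norm, Complex.sq_norm, h1]
      nlinarith [mul_pos hdr_pos hqr_pos]
    exact lt_of_pow_lt_pow_left₀ 2 (norm_nonneg _) h2
  have hP : 0 < ‖l + (dr : ℂ)‖ := (norm_nonneg l).trans_lt hlt
  have : ‖σ‖ * ‖l + (dr : ℂ)‖ < 1 * ‖l + (dr : ℂ)‖ := by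
    rw [habs, one_mul]; exact hlt
  exact lt_of_mul_lt_mul_right this (norm_nonneg _) |>.trans_le le_rfl
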